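/- Let h, w, κ, n, τ, R be positive integers. Let V consist of w columns S₁,…,S_w, each a tuple of κ·h vertices with labels in [n] that is R-multilinear, and let E consist of perfect matchings M₁,…,M_w, where M_i is a perfect matching between S_i and S_{i+1} (indices mod w). Suppose every labeled simple edge of (V,E) (the unordered pair of endpoint labels) occurs with even multiplicity. Sample a hypergraph H by, independently for each i, partitioning the κ·h edges of M_i uniformly at random into h groups of κ edges and merging each group into one order-2κ hyperedge, whose label records the multiset of its κ endpoint labels in S_i and the multiset of its κ endpoint labels in S_{i+1}. Suppose τ is a number of distinct labeled hyperedges that is achievable by this sampling. Then the probability that the sampled H has every labeled hyperedge occurring with even multiplicity and exactly τ distinct labeled hyperedges is at most (2·e^κ·κ^κ·R^{κ+1}·w)^{wh} / (κh)^{(κ−1)(wh−τ)}. -/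

import Mathlib

open Finset

/-- The cyclic successor of `i` in `Fin w`. -/
def succW {w : ℕ} (i : Fin w) : Fin w := ⟨((i : ℕ) + 1) % w, Nat.mod_lt _ i.pos⟩

/-- A tuple is `R`-multilinear if no element of `[n]` occurs more than `R` times among
its coordinates. -/
def isMultilinearN {n R : ℕ} {ι : Type*} [Fintype ι] [DecidableEq ι]
    (I : ι → Fin n) : Prop :=
  ∀ a : Fin n, (Finset.univ.filter (fun t => I t = a)).card ≤ R

/-- An (ordered) grouping of the `κ·h` matching edges of a column into `h` groups of `κ`
edges each.  (Choosing such a function uniformly at random induces the uniform distribution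
on partitions of the `κ·h` edges into `h` unordered groups of size `κ`.) -/
abbrev Grouping (κ h : ℕ) :=
  {g : Fin (κ * h) → Fin h // ∀ j, (Finset.univ.filter (fun t => g t = j)).card = κ}

/-- The label of the order-`2κ` hyperedge obtained from group `j` of column `i`: the
multiset of the labels of its `κ` endpoints in `S_i` together with the multiset of the
labels of its `κ` endpoints in `S_{i+1}` (under the matching `Mch i`). -/
def hypLabel {n κ h w : ℕ} (S : Fin w → Fin (κ * h) → Fin n)
    (Mch : Fin w → Equiv.Perm (Fin (κ * h))) (ω : Fin w → Grouping κ h)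
    (p : Fin w × Fin h) : Multiset (Fin n) × Multiset (Fin n) :=
  ((Finset.univ.filter (fun t => (ω p.1).1 t = p.2)).val.map (S p.1),
   (Finset.univ.filter (fun t => (ω p.1).1 t = p.2)).val.map
      (fun t => S (succW p.1) (Mch p.1 t)))


namespace EHS


/-- `c^c ≤ c! e^c`. -/
lemma pow_self_le_factorial_mul_exp : ∀ c : ℕ, (c:ℝ)^c ≤ c.factorial * Real.exp 1 ^ c := by
  intro c
  induction c with
  | zero => simp
  | succ c ih =>
    rcases Nat.eq_zero_or_pos c with hc | hc
    · subst hc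
      simpa using Real.one_le_exp (by norm_num : (0:ℝ) ≤ 1)
    · have hcR : (0:ℝ) < c := by exact_mod_cast hc
      have h1 : ((c:ℝ)+1) ≤ c * Real.exp (1/c) := by
        have h2 := Real.add_one_le_exp (1/(c:ℝ))
        have h3 : (c:ℝ) * (1/c + 1) ≤ c * Real.exp (1/c) :=
          mul_le_mul_of_nonneg_left h2 hcR.le
        have h4 : ((c:ℝ)+1) = (c:ℝ) * (1/c + 1) := by field_simp; ring
        rw [h4]; exact h3
      have h2 : ((c:ℝ)+1)^c ≤ (c:ℝ)^c * Real.exp 1 := by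
        calc ((c:ℝ)+1)^c ≤ ((c:ℝ) * Real.exp (1/c))^c := by
              apply pow_le_pow_left₀ (by positivity) h1
        _ = (c:ℝ)^c * (Real.exp (1/c))^c := mul_pow _ _ _
        _ = (c:ℝ)^c * Real.exp 1 := by
              rw [← Real.exp_nat_mul]
              congr 1
              field_simp
      have hfac : (0:ℝ) ≤ (c:ℝ)+1 := by positivity
      calc ((c+1:ℕ):ℝ)^(c+1) = ((c:ℝ)+1) * ((c:ℝ)+1)^c := by push_cast; ring
      _ ≤ ((c:ℝ)+1) * ((c:ℝ)^c * Real.exp 1) := by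
            exact mul_le_mul_of_nonneg_left h2 hfac
      _ ≤ ((c:ℝ)+1) * ((c.factorial * Real.exp 1 ^ c) * Real.exp 1) := by
            apply mul_le_mul_of_nonneg_left _ hfac
            exact mul_le_mul_of_nonneg_right ih (Real.exp_pos 1).le
      _ = (c+1).factorial * Real.exp 1 ^ (c+1) := by
            rw [Nat.factorial_succ]; push_cast; ring

/-- `h^c ≤ c^c e^(h-c)` for `1 ≤ c ≤ h`. -/
lemma pow_le_pow_self_mul_exp {c h : ℕ} (hc : 0 < c) (hch : c ≤ h) :
    (h:ℝ)^c ≤ (c:ℝ)^c * Real.exp 1 ^ (h - c) := by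
  have hcR : (0:ℝ) < c := by exact_mod_cast hc
  have key : (h:ℝ) ≤ c * Real.exp (((h - c : ℕ):ℝ)/c) := by
    have h2 := Real.add_one_le_exp (((h-c:ℕ):ℝ)/(c:ℝ))
    have h3 : (c:ℝ) * (((h-c:ℕ):ℝ)/c + 1) ≤ c * Real.exp (((h-c:ℕ):ℝ)/c) :=
      mul_le_mul_of_nonneg_left h2 hcR.le
    have h4 : (h:ℝ) = (c:ℝ) * (((h-c:ℕ):ℝ)/c + 1) := by
      rw [Nat.cast_sub hch]
      field_simp
      ring
    rw [h4]; exact h3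
  calc (h:ℝ)^c ≤ ((c:ℝ) * Real.exp (((h-c:ℕ):ℝ)/c))^c := by
        apply pow_le_pow_left₀ (by positivity) key
  _ = (c:ℝ)^c * (Real.exp (((h-c:ℕ):ℝ)/c))^c := mul_pow _ _ _
  _ = (c:ℝ)^c * Real.exp 1 ^ (h - c) := by
        rw [← Real.exp_nat_mul, Real.exp_one_pow]
        congr 1
        field_simp

/-- `choose n k ≤ 2^n`. -/
lemma choose_le_two_pow (n k : ℕ) : n.choose k ≤ 2^n := by
  rcases le_or_gt k n with hk | hk
  · calc n.choose k ≤ ∑ m ∈ range (n+1), n.choose m :=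
        Finset.single_le_sum (f := fun m => n.choose m) (fun _ _ => Nat.zero_le _)
          (Finset.mem_range.mpr (Nat.lt_succ_of_le hk))
    _ = 2^n := Nat.sum_range_choose n
  · rw [Nat.choose_eq_zero_of_lt hk]; exact Nat.zero_le _

/-- key binomial inequality per duplicate slot. -/
lemma key_r {κ R r : ℕ} (hrR : R ≤ r) :
    ((R*κ).choose κ) * r^κ ≤ (κ*r).choose κ * R^κ := by
  have hd : (R*κ).descFactorial κ * r^κ ≤ (κ*r).descFactorial κ * R^κ := by
    rw [Nat.descFactorial_eq_prod_range, Nat.descFactorial_eq_prod_range,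
      show r^κ = ∏ _i ∈ range κ, r from by rw [Finset.prod_const, Finset.card_range],
      show R^κ = ∏ _i ∈ range κ, R from by rw [Finset.prod_const, Finset.card_range],
      ← Finset.prod_mul_distrib, ← Finset.prod_mul_distrib]
    apply Finset.prod_le_prod'
    intro i _
    calc (R*κ - i)*r = R*κ*r - i*r := by rw [Nat.sub_mul]
    _ ≤ κ*r*R - i*R := by
        have h1 : R*κ*r = κ*r*R := by ring
        have h2 : i*R ≤ i*r := Nat.mul_le_mul_left i hrR
        omega
    _ = (κ*r - i)*R := by rw [Nat.sub_mul]
  have e1 := Nat.descFactorial_eq_factorial_mul_choose (R*κ) κ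
  have e2 := Nat.descFactorial_eq_factorial_mul_choose (κ*r) κ
  rw [e1, e2] at hd
  rw [mul_assoc, mul_assoc] at hd
  exact Nat.le_of_mul_le_mul_left hd κ.factorial_pos

/-- the per-slot inequality in `min` form -/
lemma key_min {κ R r : ℕ} (hR : 0 < R) (hr : 0 < r) :
    min ((κ*r).choose κ) ((R*κ).choose κ) * r^κ ≤ (κ*r).choose κ * R^κ := by
  rcases le_or_gt r R with hle | hlt
  · exact Nat.mul_le_mul (min_le_left _ _) (Nat.pow_le_pow_left hle κ)
  · exact le_trans (Nat.mul_le_mul_right _ (min_le_right _ _)) (key_r hlt.le)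



/-- Sequential-revelation counting: if at each step `k`, conditioned on any prefix realized in
`T`, the number of possible values at step `k` is at most `b k`, then `|T| ≤ ∏ b k`. -/
lemma chain_count {β : Type*} [DecidableEq β] :
    ∀ (M : ℕ) (T : Finset (Fin M → β)) (b : Fin M → ℕ),
      (∀ (k : Fin M), ∀ f ∈ T,
        (((T.filter (fun g => ∀ j, j < k → g j = f j)).image (fun g => g k)).card ≤ b k)) →
      T.card ≤ ∏ k, b k := by
  intro M
  induction M with
  | zero =>
    intro T b _
    have h1 : T.card ≤ 1 := Finset.card_le_one.mpr (fun f _ g _ => funext fun j => j.elim0)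
    simpa using h1
  | succ M ih =>
    intro T b hb
    classical
    set ρ : (Fin (M+1) → β) → (Fin M → β) := fun g => g ∘ Fin.castSucc with hρ
    have hcard : T.card = ∑ f' ∈ T.image ρ, (T.filter (fun g => ρ g = f')).card :=
      Finset.card_eq_sum_card_image ρ T
    have hlast : ∀ f' ∈ T.image ρ, (T.filter (fun g => ρ g = f')).card ≤ b (Fin.last M) := by
      intro f' hf'
      obtain ⟨f, hfT, hff'⟩ := Finset.mem_image.mp hf'
      have hsub : T.filter (fun g => ρ g = f')
          ⊆ T.filter (fun g => ∀ j, j < Fin.last M → g j = f j) := by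
        intro g hg
        rw [Finset.mem_filter] at hg ⊢
        refine ⟨hg.1, fun j hj => ?_⟩
        have hj' : j ≠ Fin.last M := ne_of_lt hj
        have e1 : g (Fin.castSucc (j.castPred hj')) = f (Fin.castSucc (j.castPred hj')) := by
          have e2 := congrFun (hg.2.trans hff'.symm) (j.castPred hj')
          simpa [hρ, Function.comp] using e2
        simpa [Fin.castSucc_castPred] using e1
      have hinj : Set.InjOn (fun g : Fin (M+1) → β => g (Fin.last M))
          ↑(T.filter (fun g => ∀ j, j < Fin.last M → g j = f j)) := by
        intro g1 h1 g2 h2 heq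
        simp only [Finset.coe_filter, Set.mem_setOf_eq] at h1 h2
        funext j
        rcases eq_or_lt_of_le (Fin.le_last j) with hj | hj
        · rw [hj]; exact heq
        · rw [h1.2 j hj, h2.2 j hj]
      calc (T.filter (fun g => ρ g = f')).card
          ≤ (T.filter (fun g => ∀ j, j < Fin.last M → g j = f j)).card :=
            Finset.card_le_card hsub
      _ = ((T.filter (fun g => ∀ j, j < Fin.last M → g j = f j)).image
            (fun g => g (Fin.last M))).card := (Finset.card_image_of_injOn hinj).symm
      _ ≤ b (Fin.last M) := hb _ f hfT
    have himage : (T.image ρ).card ≤ ∏ k : Fin M, b (Fin.castSucc k) := by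
      apply ih
      intro k' f' hf'
      obtain ⟨f, hfT, hff'⟩ := Finset.mem_image.mp hf'
      have hsub : ((T.image ρ).filter (fun g' => ∀ j, j < k' → g' j = f' j)).image
            (fun g' => g' k')
          ⊆ ((T.filter (fun g => ∀ j, j < Fin.castSucc k' → g j = f j)).image
            (fun g => g (Fin.castSucc k'))) := by
        intro x hx
        obtain ⟨g', hg', hx⟩ := Finset.mem_image.mp hx
        rw [Finset.mem_filter] at hg'
        obtain ⟨g, hgT, hgg'⟩ := Finset.mem_image.mp hg'.1
        refine Finset.mem_image.mpr ⟨g, Finset.mem_filter.mpr ⟨hgT, ?_⟩, ?_⟩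
        · intro j hj
          have hj' : j ≠ Fin.last M := by
            intro hcontr
            rw [hcontr] at hj
            exact absurd hj (not_lt.mpr (Fin.le_last _))
          have hj0 : j.castPred hj' < k' := by
            have h5 : Fin.castSucc (j.castPred hj') < Fin.castSucc k' := by
              rw [Fin.castSucc_castPred]; exact hj
            exact Fin.castSucc_lt_castSucc_iff.mp h5
          have e1 : g (Fin.castSucc (j.castPred hj')) = g' (j.castPred hj') := by
            rw [← hgg']; rfl
          have e2 : f (Fin.castSucc (j.castPred hj')) = f' (j.castPred hj') := by
            rw [← hff']; rfl
          have e3 : g (Fin.castSucc (j.castPred hj')) = f (Fin.castSucc (j.castPred hj')) := by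
            rw [e1, e2]; exact hg'.2 _ hj0
          simpa [Fin.castSucc_castPred] using e3
        · rw [← hx, ← hgg']; rfl
      calc _ ≤ _ := Finset.card_le_card hsub
      _ ≤ b (Fin.castSucc k') := hb _ f hfT
    calc T.card = ∑ f' ∈ T.image ρ, (T.filter (fun g => ρ g = f')).card := hcard
    _ ≤ ∑ _f' ∈ T.image ρ, b (Fin.last M) := Finset.sum_le_sum hlast
    _ = (T.image ρ).card * b (Fin.last M) := by rw [Finset.sum_const, smul_eq_mul]
    _ ≤ (∏ k : Fin M, b (Fin.castSucc k)) * b (Fin.last M) :=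
        Nat.mul_le_mul_right _ himage
    _ = ∏ k, b k := (Fin.prod_univ_castSucc b).symm



/-- fiber of a grouping -/
def fib {κ h : ℕ} (g : Grouping κ h) (j : Fin h) : Finset (Fin (κ*h)) :=
  Finset.univ.filter (fun x => g.1 x = j)

lemma fib_card {κ h : ℕ} (g : Grouping κ h) (j : Fin h) : (fib g j).card = κ := g.2 j

lemma mem_fib {κ h : ℕ} {g : Grouping κ h} {x : Fin (κ*h)} {j : Fin h} :
    x ∈ fib g j ↔ g.1 x = j := by simp [fib]

lemma fib_disjoint {κ h : ℕ} (g : Grouping κ h) {j j' : Fin h} (hjj : j ≠ j') :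
    Disjoint (fib g j) (fib g j') := by
  rw [Finset.disjoint_left]
  intro x hx hx'
  rw [mem_fib] at hx hx'
  exact hjj (hx ▸ hx' ▸ rfl)

/-- the reference column-division map -/
def fdiv {κ h : ℕ} (hκ : 0 < κ) (y : Fin (κ*h)) : Fin h :=
  ⟨(y:ℕ)/κ, by
    have h1 := y.isLt
    rw [Nat.div_lt_iff_lt_mul hκ, Nat.mul_comm h κ]
    exact h1⟩

lemma card_fiber_fdiv {κ h : ℕ} (hκ : 0 < κ) (j : Fin h) :
    (univ.filter (fun y : Fin (κ*h) => fdiv hκ y = j)).card = κ := by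
  classical
  have hcard : (univ.filter (fun y : Fin (κ*h) => fdiv hκ y = j)).card
      = (univ : Finset (Fin κ)).card := by
    refine Finset.card_bij' (fun y _ => (⟨(y:ℕ) % κ, Nat.mod_lt _ hκ⟩ : Fin κ))
      (fun r _ => (⟨(j:ℕ)*κ + (r:ℕ), by
        have h1 := j.isLt
        have h2 := r.isLt
        calc (j:ℕ)*κ + (r:ℕ) < (j:ℕ)*κ + κ := by omega
        _ = ((j:ℕ)+1)*κ := by ring
        _ ≤ h*κ := Nat.mul_le_mul_right κ h1
        _ = κ*h := Nat.mul_comm _ _⟩ : Fin (κ*h))) ?_ ?_ ?_ ?_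
    · intro y hy
      exact Finset.mem_univ _
    · intro r _
      simp only [Finset.mem_filter, Finset.mem_univ, true_and]
      apply Fin.ext
      show ((j:ℕ)*κ + (r:ℕ))/κ = (j:ℕ)
      rw [Nat.mul_comm (j:ℕ) κ, Nat.mul_add_div hκ, Nat.div_eq_of_lt r.isLt, Nat.add_zero]
    · intro y hy
      simp only [Finset.mem_filter, Finset.mem_univ, true_and] at hy
      apply Fin.ext
      show (j:ℕ)*κ + (y:ℕ)%κ = (y:ℕ)
      have h3 : (y:ℕ)/κ = (j:ℕ) := congrArg Fin.val hy
      have h4 := Nat.div_add_mod (y:ℕ) κ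
      rw [← h3, Nat.mul_comm]
      omega
    · intro r _
      apply Fin.ext
      show ((j:ℕ)*κ + (r:ℕ)) % κ = (r:ℕ)
      rw [Nat.mul_comm (j:ℕ) κ, Nat.mul_add_mod, Nat.mod_eq_of_lt r.isLt]
  rw [hcard, Finset.card_univ, Fintype.card_fin]

/-- lower bound on the number of groupings -/
lemma factorial_le_card_grouping_mul {κ h : ℕ} (hκ : 0 < κ) :
    (κ*h).factorial ≤ Fintype.card (Grouping κ h) * (κ.factorial)^h := by
  classical
  set Φ : Equiv.Perm (Fin (κ*h)) → Grouping κ h := fun σ =>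
    ⟨fun x => fdiv hκ (σ x), by
      intro j
      have hbij : (univ.filter (fun x : Fin (κ*h) => fdiv hκ (σ x) = j)).card
          = (univ.filter (fun y : Fin (κ*h) => fdiv hκ y = j)).card := by
        apply Finset.card_bij (i := fun x _ => σ x)
        · intro x hx
          simp only [Finset.mem_filter, Finset.mem_univ, true_and] at hx ⊢
          exact hx
        · intro x _ x' _ hxx
          exact σ.injective hxx
        · intro y hy
          refine ⟨σ.symm y, ?_, by simp⟩
          simp only [Finset.mem_filter, Finset.mem_univ, true_and] at hy ⊢
          simpa using hy
      rw [hbij, card_fiber_fdiv hκ j]⟩ with hΦ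
  have hcount : (univ : Finset (Equiv.Perm (Fin (κ*h)))).card
      = ∑ g ∈ (univ : Finset (Grouping κ h)), ((univ.filter (fun σ => Φ σ = g)).card) :=
    Finset.card_eq_sum_card_fiberwise (fun σ _ => Finset.mem_univ (Φ σ))
  have hfiber : ∀ g : Grouping κ h,
      (univ.filter (fun σ => Φ σ = g)).card ≤ (κ.factorial)^h := by
    intro g
    have hle : (univ.filter (fun σ => Φ σ = g)).card
        ≤ Fintype.card (∀ j : Fin h,
            (↥(fib g j) ↪ ↥(univ.filter (fun y : Fin (κ*h) => fdiv hκ y = j)))) := by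
      rw [← Fintype.card_subtype]
      apply Fintype.card_le_of_injective
        (fun σp => fun j => ⟨fun x => ⟨σp.1 x.1, by
          have hΦg : ∀ z, fdiv hκ (σp.1 z) = g.1 z :=
            fun z => congrFun (congrArg Subtype.val σp.2) z
          simp only [Finset.mem_filter, Finset.mem_univ, true_and]
          rw [hΦg x.1]
          exact mem_fib.mp x.2⟩, by
          intro a b hab
          apply Subtype.ext
          exact σp.1.injective (congrArg Subtype.val hab)⟩)
      intro σ1 σ2 heq
      apply Subtype.ext
      apply Equiv.ext
      intro x
      have hx : x ∈ fib g (g.1 x) := mem_fib.mpr rfl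
      have e1 := congrFun heq (g.1 x)
      have e2 := congrArg (fun (e : _ ↪ _) => (e ⟨x, hx⟩ : _).1) e1
      exact e2
    refine le_trans hle (le_of_eq ?_)
    rw [Fintype.card_pi]
    have : ∀ j : Fin h, Fintype.card
        (↥(fib g j) ↪ ↥(univ.filter (fun y : Fin (κ*h) => fdiv hκ y = j))) = κ.factorial := by
      intro j
      rw [Fintype.card_embedding_eq, Fintype.card_coe, Fintype.card_coe,
        fib_card, card_fiber_fdiv hκ, Nat.descFactorial_self]
    rw [Finset.prod_congr rfl (fun j _ => this j), Finset.prod_const, Finset.card_univ,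
      Fintype.card_fin]
  calc (κ*h).factorial = (univ : Finset (Equiv.Perm (Fin (κ*h)))).card := by
        rw [Finset.card_univ, Fintype.card_perm, Fintype.card_fin]
  _ = ∑ g ∈ (univ : Finset (Grouping κ h)), ((univ.filter (fun σ => Φ σ = g)).card) := hcount
  _ ≤ ∑ _g ∈ (univ : Finset (Grouping κ h)), (κ.factorial)^h :=
      Finset.sum_le_sum (fun g _ => hfiber g)
  _ = Fintype.card (Grouping κ h) * (κ.factorial)^h := by
      rw [Finset.sum_const, smul_eq_mul, Finset.card_univ]

/-- product form of the number of groupings -/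
def Nprod (κ h : ℕ) : ℕ := ∏ t ∈ Finset.range h, (κ*(h-t)).choose κ

lemma Nprod_eq (κ h : ℕ) : Nprod κ h = ∏ j ∈ Finset.range h, (κ*(j+1)).choose κ := by
  rw [Nprod, ← Finset.prod_range_reflect (fun j => (κ*(j+1)).choose κ) h]
  apply Finset.prod_congr rfl
  intro t ht
  rw [Finset.mem_range] at ht
  congr 2
  omega

lemma Nprod_mul (κ h : ℕ) (hκ : 0 < κ) :
    Nprod κ h * (κ.factorial)^h = (κ*h).factorial := by
  rw [Nprod_eq]
  induction h with
  | zero => simp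
  | succ h ih =>
    rw [Finset.prod_range_succ, pow_succ, Nat.mul_mul_mul_comm, ih]
    have hle : κ ≤ κ*(h+1) := Nat.le_mul_of_pos_right κ (Nat.succ_pos h)
    have hcf := Nat.choose_mul_factorial_mul_factorial hle
    have hsub : κ*(h+1) - κ = κ*h := by
      rw [Nat.mul_succ]; omega
    rw [hsub] at hcf
    calc (κ*h).factorial * ((κ*(h+1)).choose κ * κ.factorial)
        = (κ*(h+1)).choose κ * κ.factorial * (κ*h).factorial := by ring
    _ = (κ*(h+1)).factorial := hcf

lemma Nprod_pos {κ h : ℕ} (hκ : 0 < κ) : 0 < Nprod κ h := by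
  rw [Nprod_eq]
  apply Finset.prod_pos
  intro j hj
  exact Nat.choose_pos (Nat.le_mul_of_pos_right κ (Nat.succ_pos j))

lemma Nprod_le_card {κ h : ℕ} (hκ : 0 < κ) :
    Nprod κ h ≤ Fintype.card (Grouping κ h) := by
  have h1 : (κ*h).factorial ≤ Fintype.card (Grouping κ h) * (κ.factorial)^h :=
    factorial_le_card_grouping_mul hκ
  rw [← Nprod_mul κ h hκ] at h1
  exact Nat.le_of_mul_le_mul_right h1 (Nat.pow_pos κ.factorial_pos)

/-- `∏_{j<c} (c - j) = c!` -/
lemma prod_sub_eq_factorial (c : ℕ) : ∏ j ∈ Finset.range c, (c - j) = c.factorial := by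
  rw [← Finset.prod_range_add_one_eq_factorial,
    ← Finset.prod_range_reflect (fun j => j + 1) c]
  apply Finset.prod_congr rfl
  intro j hj
  rw [Finset.mem_range] at hj
  omega

/-- per-column natural-number bound -/
lemma col_prod_bound {κ R h c : ℕ} (hκ : 0 < κ) (hR : 0 < R) (hch : c ≤ h) :
    (∏ t ∈ Finset.range h, (if t < h - c then (κ*(h-t)).choose κ
        else min ((κ*(h-t)).choose κ) ((R*κ).choose κ))) * (c.factorial)^κ
      ≤ Nprod κ h * R^(κ*c) := by
  classical
  set F : ℕ → ℕ := fun t => (if t < h - c then (κ*(h-t)).choose κ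
      else min ((κ*(h-t)).choose κ) ((R*κ).choose κ)) with hF
  set G : ℕ → ℕ := fun t => (κ*(h-t)).choose κ with hG
  have hsplit : (h - c) + c = h := Nat.sub_add_cancel hch
  have hFsplit : ∏ t ∈ Finset.range h, F t
      = (∏ t ∈ Finset.range (h-c), F t) * ∏ x ∈ Finset.range c, F (h-c+x) := by
    have hx := Finset.prod_range_add F (h-c) c
    rwa [hsplit] at hx
  have hGsplit : Nprod κ h
      = (∏ t ∈ Finset.range (h-c), G t) * ∏ x ∈ Finset.range c, G (h-c+x) := by
    have hx := Finset.prod_range_add G (h-c) c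
    rwa [hsplit] at hx
  have hFfree : ∀ t ∈ Finset.range (h-c), F t = G t := by
    intro t ht
    rw [Finset.mem_range] at ht
    simp only [hF, hG, if_pos ht]
  have hkey : (∏ x ∈ Finset.range c, F (h-c+x)) * (c.factorial)^κ
      ≤ (∏ x ∈ Finset.range c, G (h-c+x)) * R^(κ*c) := by
    rw [← prod_sub_eq_factorial c, ← Finset.prod_pow, ← Finset.prod_mul_distrib,
      show R^(κ*c) = ∏ _x ∈ Finset.range c, R^κ from by
        rw [Finset.prod_const, Finset.card_range, ← pow_mul, Nat.mul_comm κ c],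
      ← Finset.prod_mul_distrib]
    apply Finset.prod_le_prod'
    intro x hx
    rw [Finset.mem_range] at hx
    have h1 : ¬ (h - c + x < h - c) := by omega
    have h2 : h - (h-c+x) = c - x := by omega
    simp only [hF, hG, if_neg h1, h2]
    exact key_min hR (by omega)
  calc (∏ t ∈ Finset.range h, F t) * (c.factorial)^κ
      = (∏ t ∈ Finset.range (h-c), F t)
          * ((∏ x ∈ Finset.range c, F (h-c+x)) * (c.factorial)^κ) := by
        rw [hFsplit]; ring
  _ ≤ (∏ t ∈ Finset.range (h-c), G t)
        * ((∏ x ∈ Finset.range c, G (h-c+x)) * R^(κ*c)) := by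
        apply Nat.mul_le_mul
        · exact le_of_eq (Finset.prod_congr rfl hFfree)
        · exact hkey
  _ = Nprod κ h * R^(κ*c) := by rw [hGsplit]; ring

/-- per-column real bound -/
lemma pc_real {κ h w R c : ℕ} (hκ : 0 < κ) (hw : 0 < w) (hR : 0 < R) (hh : 0 < h)
    (hch : c ≤ h) :
    ((w*h : ℕ):ℝ)^c * ((κ*h : ℕ):ℝ)^((κ-1)*c) * (R:ℝ)^(κ*c)
      ≤ (c.factorial : ℝ)^κ * (Real.exp 1 ^ κ * (κ:ℝ)^κ * (R:ℝ)^(κ+1) * (w:ℝ))^h := by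
  have hE1 : (1:ℝ) ≤ Real.exp 1 := Real.one_le_exp (by norm_num)
  have hκ1 : (1:ℝ) ≤ (κ:ℝ) := by exact_mod_cast hκ
  have hR1 : (1:ℝ) ≤ (R:ℝ) := by exact_mod_cast hR
  have hw1 : (1:ℝ) ≤ (w:ℝ) := by exact_mod_cast hw
  have hbase : (1:ℝ) ≤ Real.exp 1 ^ κ * (κ:ℝ)^κ * (R:ℝ)^(κ+1) * (w:ℝ) := by
    have b1 : (1:ℝ) ≤ Real.exp 1 ^ κ := one_le_pow₀ hE1
    have b2 : (1:ℝ) ≤ (κ:ℝ)^κ := one_le_pow₀ hκ1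
    have b3 : (1:ℝ) ≤ (R:ℝ)^(κ+1) := one_le_pow₀ hR1
    calc (1:ℝ) = 1*1*1*1 := by norm_num
    _ ≤ Real.exp 1 ^ κ * (κ:ℝ)^κ * (R:ℝ)^(κ+1) * (w:ℝ) := by
        apply mul_le_mul (mul_le_mul (mul_le_mul b1 b2 (by norm_num) (by positivity))
          b3 (by norm_num) (by positivity)) hw1 (by norm_num) (by positivity)
  rcases Nat.eq_zero_or_pos c with hc | hc
  · subst hc
    simp only [pow_zero, Nat.mul_zero, one_mul, Nat.factorial_zero, Nat.cast_one, one_pow]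
    exact one_le_pow₀ hbase
  · -- main case
    have hcass : c + (κ-1)*c = κ*c := by
      obtain ⟨κ0, rfl⟩ : ∃ κ0, κ = κ0 + 1 := ⟨κ - 1, by omega⟩
      simp only [Nat.add_sub_cancel]
      ring
    have step1 : ((w*h : ℕ):ℝ)^c * ((κ*h : ℕ):ℝ)^((κ-1)*c) * (R:ℝ)^(κ*c)
        = (w:ℝ)^c * (κ:ℝ)^((κ-1)*c) * (R:ℝ)^(κ*c) * ((h:ℝ)^c)^κ := by
      have hpowh : ((h:ℝ)^c)^κ = (h:ℝ)^c * (h:ℝ)^((κ-1)*c) := by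
        rw [← pow_mul, mul_comm c κ, ← hcass, pow_add]
      push_cast
      rw [hpowh, mul_pow, mul_pow]
      ring
    have step2 : ((h:ℝ)^c)^κ ≤ ((c.factorial:ℝ) * Real.exp 1 ^ h)^κ := by
      apply pow_le_pow_left₀ (by positivity)
      calc (h:ℝ)^c ≤ (c:ℝ)^c * Real.exp 1 ^ (h - c) := pow_le_pow_self_mul_exp hc hch
      _ ≤ ((c.factorial:ℝ) * Real.exp 1 ^ c) * Real.exp 1 ^ (h - c) := by
          apply mul_le_mul_of_nonneg_right (pow_self_le_factorial_mul_exp c) (by positivity)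
      _ = (c.factorial:ℝ) * Real.exp 1 ^ (c + (h - c)) := by rw [pow_add]; ring
      _ = (c.factorial:ℝ) * Real.exp 1 ^ h := by rw [Nat.add_sub_cancel' hch]
    have step3 : (w:ℝ)^c * (κ:ℝ)^((κ-1)*c) * (R:ℝ)^(κ*c)
        ≤ (w:ℝ)^h * ((κ:ℝ)^κ)^h * ((R:ℝ)^(κ+1))^h := by
      rw [← pow_mul, ← pow_mul]
      apply mul_le_mul (mul_le_mul (pow_le_pow_right₀ hw1 hch)
        (pow_le_pow_right₀ hκ1 (by
          calc (κ-1)*c ≤ κ*c := Nat.mul_le_mul_right c (Nat.sub_le κ 1)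
          _ ≤ κ*h := Nat.mul_le_mul_left κ hch))
        (by positivity) (by positivity))
        (pow_le_pow_right₀ hR1 (by
          calc κ*c ≤ κ*h := Nat.mul_le_mul_left κ hch
          _ ≤ (κ+1)*h := Nat.mul_le_mul_right h (Nat.le_succ κ)))
        (by positivity) (by positivity)
    calc ((w*h : ℕ):ℝ)^c * ((κ*h : ℕ):ℝ)^((κ-1)*c) * (R:ℝ)^(κ*c)
        = (w:ℝ)^c * (κ:ℝ)^((κ-1)*c) * (R:ℝ)^(κ*c) * ((h:ℝ)^c)^κ := step1
    _ ≤ (w:ℝ)^c * (κ:ℝ)^((κ-1)*c) * (R:ℝ)^(κ*c) * ((c.factorial:ℝ) * Real.exp 1 ^ h)^κ := by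
        apply mul_le_mul_of_nonneg_left step2 (by positivity)
    _ = ((c.factorial:ℝ))^κ * ((Real.exp 1 ^ h)^κ
          * ((w:ℝ)^c * (κ:ℝ)^((κ-1)*c) * (R:ℝ)^(κ*c))) := by
        rw [mul_pow]; ring
    _ ≤ ((c.factorial:ℝ))^κ * ((Real.exp 1 ^ h)^κ
          * ((w:ℝ)^h * ((κ:ℝ)^κ)^h * ((R:ℝ)^(κ+1))^h)) := by
        apply mul_le_mul_of_nonneg_left (mul_le_mul_of_nonneg_left step3 (by positivity))
          (by positivity)
    _ = (c.factorial : ℝ)^κ * (Real.exp 1 ^ κ * (κ:ℝ)^κ * (R:ℝ)^(κ+1) * (w:ℝ))^h := by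
        rw [pow_right_comm]
        rw [mul_pow, mul_pow, mul_pow]
        ring

/-! ### the slot enumeration -/

lemma card_le_h {h : ℕ} (D : Finset (Fin h)) : D.card ≤ h := by
  have h1 := Finset.card_le_univ D
  rwa [Fintype.card_fin] at h1

def eD {h : ℕ} (D : Finset (Fin h)) : Fin h → Fin h := fun t =>
  if ht : (t:ℕ) < h - D.card then
    Dᶜ.orderEmbOfFin (by rw [Finset.card_compl, Fintype.card_fin]) ⟨t, ht⟩
  else
    D.orderEmbOfFin rfl ⟨(t:ℕ) - (h - D.card), by
      have h1 : D.card ≤ h := card_le_h D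
      have h2 := t.isLt
      omega⟩

lemma eD_mem {h : ℕ} {D : Finset (Fin h)} {t : Fin h} (ht : ¬ ((t:ℕ) < h - D.card)) :
    eD D t ∈ D := by
  rw [eD, dif_neg ht]
  exact Finset.orderEmbOfFin_mem _ _ _

lemma eD_not_mem {h : ℕ} {D : Finset (Fin h)} {t : Fin h} (ht : (t:ℕ) < h - D.card) :
    eD D t ∉ D := by
  rw [eD, dif_pos ht]
  have h1 := Finset.orderEmbOfFin_mem Dᶜ
    (by rw [Finset.card_compl, Fintype.card_fin] : Dᶜ.card = h - D.card) ⟨t, ht⟩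
  rwa [Finset.mem_compl] at h1

lemma eD_injective {h : ℕ} (D : Finset (Fin h)) : Function.Injective (eD D) := by
  intro t1 t2 heq
  by_cases h1 : (t1:ℕ) < h - D.card <;> by_cases h2 : (t2:ℕ) < h - D.card
  · simp only [eD, dif_pos h1, dif_pos h2] at heq
    have h3 := (Dᶜ.orderEmbOfFin
      (by rw [Finset.card_compl, Fintype.card_fin] : Dᶜ.card = h - D.card)).injective heq
    have h4 : (t1:ℕ) = (t2:ℕ) := by simpa using h3
    exact Fin.val_injective h4
  · exact absurd (heq ▸ eD_mem h2) (eD_not_mem h1)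
  · exact absurd (heq ▸ eD_not_mem h2) (by simpa using eD_mem h1)
  · simp only [eD, dif_neg h1, dif_neg h2] at heq
    have h3 := (D.orderEmbOfFin rfl).injective heq
    have h4 := congrArg Fin.val h3
    simp only at h4
    have h5 := t1.isLt
    have h6 := t2.isLt
    apply Fin.ext
    omega

lemma eD_bijective {h : ℕ} (D : Finset (Fin h)) : Function.Bijective (eD D) :=
  Finite.injective_iff_bijective.mp (eD_injective D)

/-! ### step indexing -/

def mkStep {w h : ℕ} (i : Fin w) (t : Fin h) : Fin (w*h) :=
  ⟨(i:ℕ)*h + (t:ℕ), by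
    have h1 := i.isLt
    have h2 := t.isLt
    calc (i:ℕ)*h + (t:ℕ) < (i:ℕ)*h + h := by omega
    _ = ((i:ℕ)+1)*h := by ring
    _ ≤ w*h := Nat.mul_le_mul_right h h1⟩

lemma divNat_mkStep {w h : ℕ} (hh : 0 < h) (i : Fin w) (t : Fin h) :
    (mkStep i t).divNat = i := by
  apply Fin.ext
  show ((i:ℕ)*h + (t:ℕ))/h = (i:ℕ)
  rw [Nat.mul_comm (i:ℕ) h, Nat.mul_add_div hh, Nat.div_eq_of_lt t.isLt, Nat.add_zero]

lemma modNat_mkStep {w h : ℕ} (i : Fin w) (t : Fin h) : (mkStep i t).modNat = t := by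
  apply Fin.ext
  show ((i:ℕ)*h + (t:ℕ)) % h = (t:ℕ)
  rw [Nat.mul_comm (i:ℕ) h, Nat.mul_add_mod, Nat.mod_eq_of_lt t.isLt]

lemma mkStep_divNat_modNat {w h : ℕ} (k : Fin (w*h)) : mkStep k.divNat k.modNat = k := by
  apply Fin.ext
  show ((k:ℕ)/h)*h + (k:ℕ)%h = (k:ℕ)
  rw [Nat.mul_comm]
  exact Nat.div_add_mod _ _

lemma mkStep_lt_mkStep {w h : ℕ} {i i' : Fin w} {t t' : Fin h}
    (hlt : (i:ℕ) < (i':ℕ) ∨ ((i:ℕ) = (i':ℕ) ∧ (t:ℕ) < (t':ℕ))) :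
    mkStep i t < mkStep i' t' := by
  rw [Fin.lt_def]
  show (i:ℕ)*h + (t:ℕ) < (i':ℕ)*h + (t':ℕ)
  rcases hlt with h1 | ⟨h1, h2⟩
  · have h2 := t.isLt
    calc (i:ℕ)*h + (t:ℕ) < (i:ℕ)*h + h := by omega
    _ = ((i:ℕ)+1)*h := by ring
    _ ≤ (i':ℕ)*h := Nat.mul_le_mul_right h h1
    _ ≤ (i':ℕ)*h + (t':ℕ) := Nat.le_add_right _ _
  · rw [h1]; omega

/-! ### the revelation encoding -/

def Di {w h : ℕ} (D : Finset (Fin w × Fin h)) (i : Fin w) : Finset (Fin h) :=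
  Finset.univ.filter (fun j => (i, j) ∈ D)

def emb {w h κ : ℕ} (D : Finset (Fin w × Fin h)) (ω : Fin w → Grouping κ h) :
    Fin (w*h) → Finset (Fin (κ*h)) :=
  fun k => fib (ω k.divNat) (eD (Di D k.divNat) k.modNat)

lemma emb_injective {w h κ : ℕ} (hh : 0 < h) (D : Finset (Fin w × Fin h)) :
    Function.Injective (emb (κ := κ) D) := by
  intro ω ω' he
  have hfib : ∀ (i : Fin w) (j : Fin h), fib (ω i) j = fib (ω' i) j := by
    intro i j
    obtain ⟨t, ht⟩ := (eD_bijective (Di D i)).2 j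
    have h1 := congrFun he (mkStep i t)
    simp only [emb] at h1
    rw [divNat_mkStep hh, modNat_mkStep, ht] at h1
    exact h1
  funext i
  apply Subtype.ext
  funext x
  have hx : x ∈ fib (ω i) ((ω i).1 x) := mem_fib.mpr rfl
  rw [hfib i ((ω i).1 x)] at hx
  exact (mem_fib.mp hx).symm

/-! ### main counting lemma -/

lemma count_X {h w κ n R : ℕ} (hh : 0 < h) (hκ : 0 < κ)
    (S : Fin w → Fin (κ*h) → Fin n) (Mch : Fin w → Equiv.Perm (Fin (κ*h)))
    (hmult : ∀ i, isMultilinearN (R := R) (S i))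
    (D : Finset (Fin w × Fin h)) (f : Fin w × Fin h → Fin w × Fin h)
    (hf : ∀ p ∈ D, f p ∉ D ∧ ((f p).1 : ℕ) ≤ (p.1 : ℕ)) :
    ((Finset.univ : Finset (Fin w → Grouping κ h)).filter
        (fun ω => ∀ p ∈ D, hypLabel S Mch ω p = hypLabel S Mch ω (f p))).card
      ≤ ∏ i : Fin w, ∏ t : Fin h,
          (if (t:ℕ) < h - (Di D i).card then (κ*(h-(t:ℕ))).choose κ
           else min ((κ*(h-(t:ℕ))).choose κ) ((R*κ).choose κ)) := by
  classical
  set X := (Finset.univ : Finset (Fin w → Grouping κ h)).filter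
      (fun ω => ∀ p ∈ D, hypLabel S Mch ω p = hypLabel S Mch ω (f p)) with hX
  set b : Fin (w*h) → ℕ := fun k =>
    (if (k.modNat : ℕ) < h - (Di D k.divNat).card
      then (κ*(h-(k.modNat : ℕ))).choose κ
      else min ((κ*(h-(k.modNat : ℕ))).choose κ) ((R*κ).choose κ)) with hbdef
  have hXT : X.card = (X.image (emb D)).card :=
    (Finset.card_image_of_injective X (emb_injective hh D)).symm
  set T := X.image (emb D) with hT
  have hbnd : ∀ (k : Fin (w*h)), ∀ fT ∈ T,
      (((T.filter (fun g => ∀ j, j < k → g j = fT j)).image (fun g => g k)).card ≤ b k) := by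
    intro k fT hfT
    obtain ⟨ω₀, hω₀X, hω₀⟩ := Finset.mem_image.mp hfT
    have hA : ∀ A ∈ (T.filter (fun g => ∀ j, j < k → g j = fT j)).image (fun g => g k),
        ∃ ω' , ω' ∈ X ∧ A = fib (ω' k.divNat) (eD (Di D k.divNat) k.modNat) ∧
          ∀ k' : Fin (w*h), k' < k → emb D ω' k' = fT k' := by
      intro A hAmem
      obtain ⟨g, hg, hAg⟩ := Finset.mem_image.mp hAmem
      rw [Finset.mem_filter] at hg
      obtain ⟨ω', hω'X, hω'⟩ := Finset.mem_image.mp hg.1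
      refine ⟨ω', hω'X, ?_, fun k' hk' => by rw [hω']; exact hg.2 k' hk'⟩
      rw [← hAg, ← hω']
      rfl
    set Prev : Finset (Fin (w*h)) :=
      Finset.univ.filter (fun k' => k' < k ∧ k'.divNat = k.divNat) with hPrevDef
    have hkmk : k = mkStep k.divNat k.modNat := (mkStep_divNat_modNat k).symm
    have hPrevcard : Prev.card = (k.modNat : ℕ) := by
      have hcard : Prev.card = (Finset.range (k.modNat : ℕ)).card := by
        refine Finset.card_bij' (fun k' _ => ((k'.modNat : Fin h) : ℕ))
          (fun s hs => mkStep k.divNat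
            (⟨s, lt_trans (Finset.mem_range.mp hs) (k.modNat).isLt⟩ : Fin h)) ?_ ?_ ?_ ?_
        · intro k' hk'
          rw [Finset.mem_range]
          obtain ⟨-, hlt, hdiv⟩ := Finset.mem_filter.mp hk'
          have e1 : k' = mkStep k.divNat k'.modNat := by
            rw [← hdiv]; exact (mkStep_divNat_modNat k').symm
          rw [Fin.lt_def] at hlt
          conv_lhs at hlt => rw [e1]
          conv_rhs at hlt => rw [hkmk]
          simpa [mkStep] using hlt
        · intro s hs
          rw [hPrevDef, Finset.mem_filter]
          refine ⟨Finset.mem_univ _, ?_, divNat_mkStep hh _ _⟩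
          conv_rhs => rw [hkmk]
          exact mkStep_lt_mkStep (Or.inr ⟨rfl, Finset.mem_range.mp hs⟩)
        · intro k' hk'
          obtain ⟨-, hlt, hdiv⟩ := Finset.mem_filter.mp hk'
          apply Fin.val_injective
          show ((k.divNat : Fin w):ℕ)*h + ((k'.modNat : Fin h):ℕ) = (k':ℕ)
          rw [← hdiv]
          exact congrArg Fin.val (mkStep_divNat_modNat k')
        · intro s hs
          simp only [modNat_mkStep]
      rw [hcard, Finset.card_range]
    set B : Finset (Fin (κ*h)) := Prev.biUnion fT with hBdef
    have hfTk' : ∀ k' ∈ Prev, fT k' = fib (ω₀ k.divNat) (eD (Di D k.divNat) k'.modNat) := by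
      intro k' hk'
      obtain ⟨-, hlt, hdiv⟩ := Finset.mem_filter.mp hk'
      rw [← hω₀]
      show emb D ω₀ k' = _
      rw [emb, hdiv]
    have hdisj : ∀ k1 ∈ Prev, ∀ k2 ∈ Prev, k1 ≠ k2 → Disjoint (fT k1) (fT k2) := by
      intro k1 h1 k2 h2 h12
      rw [hfTk' k1 h1, hfTk' k2 h2]
      apply fib_disjoint
      intro hcon
      apply h12
      have e1 := eD_injective _ hcon
      obtain ⟨-, -, hdiv1⟩ := Finset.mem_filter.mp h1
      obtain ⟨-, -, hdiv2⟩ := Finset.mem_filter.mp h2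
      rw [← mkStep_divNat_modNat k1, ← mkStep_divNat_modNat k2, hdiv1, hdiv2, e1]
    have hBcard : B.card = κ * (k.modNat : ℕ) := by
      rw [hBdef, Finset.card_biUnion hdisj]
      have hsum : ∑ k' ∈ Prev, (fT k').card = ∑ _k' ∈ Prev, κ :=
        Finset.sum_congr rfl (fun k' hk' => by rw [hfTk' k' hk', fib_card])
      rw [hsum, Finset.sum_const, smul_eq_mul, hPrevcard, Nat.mul_comm]
    have hcompl : ((Finset.univ : Finset (Fin (κ*h))) \ B).card = κ*(h - (k.modNat:ℕ)) := by
      rw [Finset.card_sdiff_of_subset (Finset.subset_univ B), Finset.card_univ, Fintype.card_fin, hBcard,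
        Nat.mul_sub]
    have hfree : ((T.filter (fun g => ∀ j, j < k → g j = fT j)).image (fun g => g k)).card
        ≤ (κ*(h-(k.modNat:ℕ))).choose κ := by
      have hsub : (T.filter (fun g => ∀ j, j < k → g j = fT j)).image (fun g => g k)
          ⊆ ((Finset.univ : Finset (Fin (κ*h))) \ B).powersetCard κ := by
        intro A hAmem
        obtain ⟨ω', hω'X, hAe, hagree⟩ := hA A hAmem
        rw [Finset.mem_powersetCard]
        refine ⟨?_, by rw [hAe, fib_card]⟩
        intro x hx
        rw [Finset.mem_sdiff]
        refine ⟨Finset.mem_univ x, ?_⟩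
        intro hxB
        obtain ⟨k', hk', hxk'⟩ := Finset.mem_biUnion.mp hxB
        obtain ⟨-, hlt', hdiv'⟩ := Finset.mem_filter.mp hk'
        have e3 : fT k' = fib (ω' k.divNat) (eD (Di D k.divNat) k'.modNat) := by
          rw [← hagree k' hlt']
          show emb D ω' k' = _
          rw [emb, hdiv']
        rw [e3] at hxk'
        rw [hAe] at hx
        have hne : eD (Di D k.divNat) k.modNat ≠ eD (Di D k.divNat) k'.modNat := by
          intro hcon
          have e4 := eD_injective _ hcon
          have e5 : k' = k := by
            rw [← mkStep_divNat_modNat k', hdiv', ← e4, ← hkmk]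
          rw [e5] at hlt'
          exact lt_irrefl k hlt'
        exact (Finset.disjoint_left.mp (fib_disjoint (ω' k.divNat) hne)) hx hxk'
      calc ((T.filter (fun g => ∀ j, j < k → g j = fT j)).image (fun g => g k)).card
          ≤ (((Finset.univ : Finset (Fin (κ*h))) \ B).powersetCard κ).card :=
            Finset.card_le_card hsub
      _ = (((Finset.univ : Finset (Fin (κ*h))) \ B).card).choose κ :=
            Finset.card_powersetCard κ _
      _ = (κ*(h-(k.modNat:ℕ))).choose κ := by rw [hcompl]
    by_cases hcheap : (k.modNat : ℕ) < h - (Di D k.divNat).card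
    · simp only [hbdef]
      rw [if_pos hcheap]
      exact hfree
    · -- duplicate slot
      have hp : ((k.divNat : Fin w), eD (Di D k.divNat) k.modNat) ∈ D := by
        have h1 := eD_mem hcheap
        rw [Di, Finset.mem_filter] at h1
        exact h1.2
      obtain ⟨q, hqdef⟩ : ∃ q, q = f ((k.divNat : Fin w), eD (Di D k.divNat) k.modNat) :=
        ⟨_, rfl⟩
      have hq1 : q ∉ D := by rw [hqdef]; exact (hf _ hp).1
      have hq2 : ((q.1 : Fin w) : ℕ) ≤ ((k.divNat : Fin w) : ℕ) := by
        rw [hqdef]; exact (hf _ hp).2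
      obtain ⟨s, hsq⟩ : ∃ s : Fin h, eD (Di D q.1) s = q.2 := (eD_bijective (Di D q.1)).2 q.2
      have hkqk : mkStep q.1 s < k := by
        rcases lt_or_eq_of_le hq2 with hlt | heqc
        · conv_rhs => rw [hkmk]
          exact mkStep_lt_mkStep (Or.inl hlt)
        · have hsfree : (s:ℕ) < h - (Di D q.1).card := by
            by_contra hcon
            apply hq1
            have h2 := eD_mem hcon
            rw [hsq] at h2
            simp only [Di, Finset.mem_filter, Finset.mem_univ, true_and] at h2
            simpa using h2
          have hcol : q.1 = (k.divNat : Fin w) := Fin.ext heqc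
          have hcolcard : (Di D q.1).card = (Di D k.divNat).card := by rw [hcol]
          conv_rhs => rw [hkmk]
          apply mkStep_lt_mkStep
          right
          refine ⟨heqc, ?_⟩
          have h6 : (s:ℕ) < h - (Di D k.divNat).card := hcolcard ▸ hsfree
          exact lt_of_lt_of_le h6 (Nat.le_of_not_lt hcheap)
      have hcheapbnd :
          ((T.filter (fun g => ∀ j, j < k → g j = fT j)).image (fun g => g k)).card
          ≤ ((R*κ).choose κ) := by
        set ℓ1 : Multiset (Fin n) := (fT (mkStep q.1 s)).val.map (S q.1) with hℓ1
        set U : Finset (Fin (κ*h)) :=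
          Finset.univ.filter (fun x => S k.divNat x ∈ ℓ1) with hUdef
        have hUcard : U.card ≤ R*κ := by
          have hsubU : U ⊆ ℓ1.toFinset.biUnion
              (fun a => Finset.univ.filter (fun x => S k.divNat x = a)) := by
            intro x hx
            rw [Finset.mem_biUnion]
            rw [hUdef, Finset.mem_filter] at hx
            exact ⟨S k.divNat x, Multiset.mem_toFinset.mpr hx.2,
              Finset.mem_filter.mpr ⟨Finset.mem_univ _, rfl⟩⟩
          calc U.card ≤ (ℓ1.toFinset.biUnion
              (fun a => Finset.univ.filter (fun x => S k.divNat x = a))).card :=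
                Finset.card_le_card hsubU
          _ ≤ ∑ a ∈ ℓ1.toFinset, (Finset.univ.filter (fun x => S k.divNat x = a)).card :=
                Finset.card_biUnion_le
          _ ≤ ∑ _a ∈ ℓ1.toFinset, R := Finset.sum_le_sum (fun a _ => hmult k.divNat a)
          _ = ℓ1.toFinset.card * R := by rw [Finset.sum_const, smul_eq_mul]
          _ ≤ Multiset.card ℓ1 * R :=
                Nat.mul_le_mul_right R (Multiset.toFinset_card_le ℓ1)
          _ = κ * R := by
                rw [hℓ1, Multiset.card_map]
                have e7 : (fT (mkStep q.1 s)).card = κ := by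
                  rw [← hω₀]
                  show (emb D ω₀ (mkStep q.1 s)).card = κ
                  rw [emb]
                  exact fib_card _ _
                rw [show Multiset.card (fT (mkStep q.1 s)).val
                    = (fT (mkStep q.1 s)).card from rfl, e7]
          _ = R*κ := Nat.mul_comm _ _
        have hsub2 : (T.filter (fun g => ∀ j, j < k → g j = fT j)).image (fun g => g k)
            ⊆ U.powersetCard κ := by
          intro A hAmem
          obtain ⟨ω', hω'X, hAe, hagree⟩ := hA A hAmem
          have hagkq : emb D ω' (mkStep q.1 s) = fT (mkStep q.1 s) := hagree _ hkqk
          have hfibq : fib (ω' q.1) q.2 = fT (mkStep q.1 s) := by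
            rw [← hagkq]
            show fib (ω' q.1) q.2
              = fib (ω' (mkStep q.1 s).divNat) (eD (Di D (mkStep q.1 s).divNat)
                  (mkStep q.1 s).modNat)
            rw [divNat_mkStep hh, modNat_mkStep, hsq]
          have hlab := (Finset.mem_filter.mp hω'X).2 _ hp
          have hfst : A.val.map (S k.divNat) = ℓ1 := by
            have e5 : (hypLabel S Mch ω'
                ((k.divNat : Fin w), eD (Di D k.divNat) k.modNat)).1
                = A.val.map (S k.divNat) := by
              rw [hAe]; rfl
            have e6 : (hypLabel S Mch ω' q).1 = ℓ1 := by
              rw [hℓ1, ← hfibq]; rfl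
            calc A.val.map (S k.divNat)
                = (hypLabel S Mch ω'
                    ((k.divNat : Fin w), eD (Di D k.divNat) k.modNat)).1 := e5.symm
            _ = (hypLabel S Mch ω' q).1 := by rw [hqdef]; exact congrArg Prod.fst hlab
            _ = ℓ1 := e6
          rw [Finset.mem_powersetCard]
          refine ⟨?_, by rw [hAe, fib_card]⟩
          intro x hx
          rw [hUdef, Finset.mem_filter]
          refine ⟨Finset.mem_univ _, ?_⟩
          rw [← hfst]
          exact Multiset.mem_map_of_mem _ hx
        calc ((T.filter (fun g => ∀ j, j < k → g j = fT j)).image (fun g => g k)).card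
            ≤ (U.powersetCard κ).card := Finset.card_le_card hsub2
        _ = U.card.choose κ := Finset.card_powersetCard κ U
        _ ≤ (R*κ).choose κ := Nat.choose_le_choose κ hUcard
      simp only [hbdef]
      rw [if_neg hcheap]
      exact Nat.le_min.mpr ⟨hfree, hcheapbnd⟩
  rw [hXT]
  calc T.card ≤ ∏ k, b k := chain_count (w*h) T b hbnd
  _ = ∏ p : Fin w × Fin h, b (finProdFinEquiv p) := (Equiv.prod_comp finProdFinEquiv b).symm
  _ = ∏ i : Fin w, ∏ t : Fin h,
        (if (t:ℕ) < h - (Di D i).card then (κ*(h-(t:ℕ))).choose κ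
         else min ((κ*(h-(t:ℕ))).choose κ) ((R*κ).choose κ)) := by
      rw [Fintype.prod_prod_type]
      refine Finset.prod_congr rfl (fun i _ => Finset.prod_congr rfl (fun t _ => ?_))
      have h1 := finProdFinEquiv_symm_apply (finProdFinEquiv (i, t))
      rw [Equiv.symm_apply_apply] at h1
      have h2 : (finProdFinEquiv (i, t) : Fin (w*h)).divNat = i :=
        (congrArg Prod.fst h1).symm
      have h3 : (finProdFinEquiv (i, t) : Fin (w*h)).modNat = t :=
        (congrArg Prod.snd h1).symm
      simp only [hbdef, h2, h3]


end EHS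

open EHS in
set_option maxHeartbeats 1000000 in
open Classical in
theorem even_hypergraph_sampling_probability_bound
    (h w κ n τ R : ℕ) (hh : 0 < h) (hw : 0 < w) (hκ : 0 < κ) (hn : 0 < n)
    (hτ : 0 < τ) (hR : 0 < R)
    (S : Fin w → Fin (κ * h) → Fin n)
    (hmult : ∀ i, isMultilinearN (R := R) (S i))
    (Mch : Fin w → Equiv.Perm (Fin (κ * h)))
    (heven : ∀ e : Sym2 (Fin n),
      Even (((Finset.univ : Finset (Fin w × Fin (κ * h))).filter
        (fun p => s(S p.1 p.2, S (succW p.1) (Mch p.1 p.2)) = e)).card))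
    (hach : ∃ ω : Fin w → Grouping κ h,
      ((Finset.univ : Finset (Fin w × Fin h)).image (hypLabel S Mch ω)).card = τ) :
    (((Finset.univ : Finset (Fin w → Grouping κ h)).filter (fun ω =>
        (∀ ℓ : Multiset (Fin n) × Multiset (Fin n),
          Even (((Finset.univ : Finset (Fin w × Fin h)).filter
            (fun p => hypLabel S Mch ω p = ℓ)).card)) ∧
        ((Finset.univ : Finset (Fin w × Fin h)).image (hypLabel S Mch ω)).card = τ)).card : ℝ)
        / (Fintype.card (Fin w → Grouping κ h) : ℝ)
      ≤ (2 * Real.exp 1 ^ κ * (κ : ℝ) ^ κ * (R : ℝ) ^ (κ + 1) * w) ^ (w * h)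
        / ((κ * h : ℝ)) ^ ((κ - 1) * (w * h - τ)) := by
  classical
  set E := (Finset.univ : Finset (Fin w → Grouping κ h)).filter (fun ω =>
      (∀ ℓ : Multiset (Fin n) × Multiset (Fin n),
        Even (((Finset.univ : Finset (Fin w × Fin h)).filter
          (fun p => hypLabel S Mch ω p = ℓ)).card)) ∧
      ((Finset.univ : Finset (Fin w × Fin h)).image (hypLabel S Mch ω)).card = τ) with hE
  set X : Finset (Fin w × Fin h) → ((Fin w × Fin h) → (Fin w × Fin h)) →
      Finset (Fin w → Grouping κ h) := fun D f =>
    (Finset.univ).filter (fun ω => ∀ p ∈ D, hypLabel S Mch ω p = hypLabel S Mch ω (f p))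
    with hXdef
  set F : Finset (Fin w × Fin h) → Finset ((Fin w × Fin h) → (Fin w × Fin h)) := fun D =>
    (Finset.univ).filter (fun f => (∀ p, p ∉ D → f p = p) ∧
      ∀ p ∈ D, f p ∉ D ∧ ((f p).1 : ℕ) ≤ (p.1 : ℕ)) with hFdef
  set 𝒟 := Finset.powersetCard (w*h - τ) (Finset.univ : Finset (Fin w × Fin h)) with h𝒟
  -- ordering of positions
  have hordinj : ∀ p q : Fin w × Fin h,
      (p.1:ℕ)*h + (p.2:ℕ) = (q.1:ℕ)*h + (q.2:ℕ) → p = q := by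
    intro p q he
    have h1 := p.2.isLt
    have h2 := q.2.isLt
    have h3 : (p.1:ℕ) = (q.1:ℕ) := by
      by_contra hne
      rcases Nat.lt_or_ge (p.1:ℕ) (q.1:ℕ) with hl | hg
      · have h4 : (p.1:ℕ)*h + (p.2:ℕ) < (q.1:ℕ)*h := by
          calc (p.1:ℕ)*h + (p.2:ℕ) < (p.1:ℕ)*h + h := by omega
          _ = ((p.1:ℕ)+1)*h := by ring
          _ ≤ (q.1:ℕ)*h := Nat.mul_le_mul_right h hl
        omega
      · have hg' : (q.1:ℕ) < (p.1:ℕ) := by omega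
        have h4 : (q.1:ℕ)*h + (q.2:ℕ) < (p.1:ℕ)*h := by
          calc (q.1:ℕ)*h + (q.2:ℕ) < (q.1:ℕ)*h + h := by omega
          _ = ((q.1:ℕ)+1)*h := by ring
          _ ≤ (p.1:ℕ)*h := Nat.mul_le_mul_right h hg'
        omega
    have h5 : (p.1:ℕ)*h = (q.1:ℕ)*h := by rw [h3]
    have h6 : (p.2:ℕ) = (q.2:ℕ) := by omega
    exact Prod.ext (Fin.val_injective h3) (Fin.val_injective h6)
  -- the certificate
  have hEsub : E ⊆ 𝒟.biUnion (fun D => (F D).biUnion (fun f => X D f)) := by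
    intro ω hω
    have hτω : ((Finset.univ : Finset (Fin w × Fin h)).image (hypLabel S Mch ω)).card = τ :=
      (Finset.mem_filter.mp hω).2.2
    have hclsne : ∀ p : Fin w × Fin h, ((Finset.univ.filter
        (fun q => hypLabel S Mch ω q = hypLabel S Mch ω p)).image
          (fun q => (q.1:ℕ)*h + (q.2:ℕ))).Nonempty :=
      fun p => ⟨_, Finset.mem_image_of_mem _
        (Finset.mem_filter.mpr ⟨Finset.mem_univ p, rfl⟩)⟩
    have hex : ∀ p : Fin w × Fin h, ∃ q : Fin w × Fin h,
        (hypLabel S Mch ω q = hypLabel S Mch ω p) ∧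
        (q.1:ℕ)*h + (q.2:ℕ) = ((Finset.univ.filter
          (fun q' => hypLabel S Mch ω q' = hypLabel S Mch ω p)).image
            (fun q' => (q'.1:ℕ)*h + (q'.2:ℕ))).min' (hclsne p) := by
      intro p
      obtain ⟨q, hq, he⟩ := Finset.mem_image.mp (Finset.min'_mem _ (hclsne p))
      exact ⟨q, (Finset.mem_filter.mp hq).2, he⟩
    set μ : (Fin w × Fin h) → (Fin w × Fin h) := fun p => (hex p).choose with hμ
    have hμlab : ∀ p, hypLabel S Mch ω (μ p) = hypLabel S Mch ω p :=
      fun p => (hex p).choose_spec.1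
    have hμord : ∀ p, ((μ p).1:ℕ)*h + ((μ p).2:ℕ) = ((Finset.univ.filter
        (fun q' => hypLabel S Mch ω q' = hypLabel S Mch ω p)).image
          (fun q' => (q'.1:ℕ)*h + (q'.2:ℕ))).min' (hclsne p) :=
      fun p => (hex p).choose_spec.2
    have hμle : ∀ p q, hypLabel S Mch ω q = hypLabel S Mch ω p →
        ((μ p).1:ℕ)*h + ((μ p).2:ℕ) ≤ (q.1:ℕ)*h + (q.2:ℕ) := by
      intro p q hq
      rw [hμord p]
      exact Finset.min'_le _ _ (Finset.mem_image_of_mem _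
        (Finset.mem_filter.mpr ⟨Finset.mem_univ q, hq⟩))
    have hclseq : ∀ p q, hypLabel S Mch ω q = hypLabel S Mch ω p → μ q = μ p := by
      intro p q hq
      apply hordinj
      rw [hμord p, hμord q]
      congr 2
      apply Finset.filter_congr
      intro r _
      simp only [hq]
    have hμidem : ∀ p, μ (μ p) = μ p := fun p => hclseq p (μ p) (hμlab p)
    set Dω := Finset.univ.filter (fun p : Fin w × Fin h => ¬ (μ p = p)) with hDω
    have hfixcard : (Finset.univ.filter (fun p : Fin w × Fin h => μ p = p)).card = τ := by
      rw [← hτω]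
      apply Finset.card_bij (fun p _ => hypLabel S Mch ω p)
      · intro p _
        exact Finset.mem_image_of_mem _ (Finset.mem_univ p)
      · intro p hp q hq heq
        have e1 : μ p = μ q := hclseq q p heq
        have e2 : μ p = p := (Finset.mem_filter.mp hp).2
        have e3 : μ q = q := (Finset.mem_filter.mp hq).2
        calc p = μ p := e2.symm
        _ = μ q := e1
        _ = q := e3
      · intro ℓ hℓ
        obtain ⟨p, -, rfl⟩ := Finset.mem_image.mp hℓ
        exact ⟨μ p, Finset.mem_filter.mpr ⟨Finset.mem_univ _, hμidem p⟩, hμlab p⟩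
    have hDωcard : Dω.card = w*h - τ := by
      have hsplit := Finset.card_filter_add_card_filter_not
        (s := (Finset.univ : Finset (Fin w × Fin h))) (p := fun p => μ p = p)
      have huniv : (Finset.univ : Finset (Fin w × Fin h)).card = w*h := by
        rw [Finset.card_univ, Fintype.card_prod, Fintype.card_fin, Fintype.card_fin]
      rw [hfixcard, huniv] at hsplit
      rw [hDω]
      omega
    refine Finset.mem_biUnion.mpr ⟨Dω, Finset.mem_powersetCard.mpr
      ⟨Finset.subset_univ _, hDωcard⟩, ?_⟩
    refine Finset.mem_biUnion.mpr ⟨fun p => if p ∈ Dω then μ p else p, ?_, ?_⟩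
    · rw [hFdef]
      refine Finset.mem_filter.mpr ⟨Finset.mem_univ _, fun p hp => by simp [if_neg hp], ?_⟩
      intro p hp
      simp only [if_pos hp]
      constructor
      · rw [hDω, Finset.mem_filter]
        push_neg
        intro _
        exact hμidem p
      · have hle := hμle p p rfl
        by_contra hcon
        push_neg at hcon
        have h4 : (p.1:ℕ)*h + (p.2:ℕ) < ((μ p).1:ℕ)*h := by
          have h5 := p.2.isLt
          calc (p.1:ℕ)*h + (p.2:ℕ) < (p.1:ℕ)*h + h := by omega
          _ = ((p.1:ℕ)+1)*h := by ring
          _ ≤ ((μ p).1:ℕ)*h := Nat.mul_le_mul_right h hcon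
        have h6 := Nat.le_add_right (((μ p).1:ℕ)*h) ((μ p).2:ℕ)
        omega
    · rw [hXdef]
      refine Finset.mem_filter.mpr ⟨Finset.mem_univ _, ?_⟩
      intro p hp
      simp only [if_pos hp]
      exact (hμlab p).symm
  -- counting
  have hcount : E.card ≤ ∑ D ∈ 𝒟, ∑ f ∈ F D, (X D f).card := by
    calc E.card ≤ (𝒟.biUnion (fun D => (F D).biUnion (fun f => X D f))).card :=
        Finset.card_le_card hEsub
    _ ≤ ∑ D ∈ 𝒟, ((F D).biUnion (fun f => X D f)).card := Finset.card_biUnion_le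
    _ ≤ ∑ D ∈ 𝒟, ∑ f ∈ F D, (X D f).card :=
        Finset.sum_le_sum (fun D _ => Finset.card_biUnion_le)
  -- per-(D,f) real bound
  set ER : ℝ := Real.exp 1 ^ κ * (κ:ℝ)^κ * (R:ℝ)^(κ+1) * (w:ℝ) with hER
  have hERpos : (0:ℝ) < ER := by
    rw [hER]; positivity
  have hperD : ∀ D ∈ 𝒟, ∀ f ∈ F D,
      ((X D f).card : ℝ) * (((w*h:ℕ):ℝ)^(w*h-τ) * ((κ*h:ℕ):ℝ)^((κ-1)*(w*h-τ)))
        ≤ ((Nprod κ h : ℕ):ℝ)^w * ER^(w*h) := by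
    intro D hD f hf
    have hfprop : ∀ p ∈ D, f p ∉ D ∧ ((f p).1 : ℕ) ≤ (p.1 : ℕ) := by
      intro p hp
      have := (Finset.mem_filter.mp hf).2.2
      exact this p hp
    have hDcard : D.card = w*h - τ := (Finset.mem_powersetCard.mp hD).2
    -- fiberwise decomposition of |D|
    have hDi : ∀ i, (D.filter (fun p => p.1 = i)).card = (Di D i).card := by
      intro i
      apply Finset.card_bij (fun p _ => p.2)
      · intro p hp
        obtain ⟨hpD, hp1⟩ := Finset.mem_filter.mp hp
        rw [Di, Finset.mem_filter]
        refine ⟨Finset.mem_univ _, ?_⟩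
        rw [← hp1]
        simpa using hpD
      · intro p1 hp1 p2 hp2 he
        obtain ⟨-, e1⟩ := Finset.mem_filter.mp hp1
        obtain ⟨-, e2⟩ := Finset.mem_filter.mp hp2
        exact Prod.ext (e1.trans e2.symm) he
      · intro j hj
        rw [Di, Finset.mem_filter] at hj
        exact ⟨(i, j), Finset.mem_filter.mpr ⟨hj.2, rfl⟩, rfl⟩
    have hsumc : ∑ i : Fin w, (Di D i).card = w*h - τ := by
      rw [← hDcard, Finset.card_eq_sum_card_fiberwise
        (f := fun p : Fin w × Fin h => p.1) (t := Finset.univ) (fun p _ => Finset.mem_univ p.1)]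
      exact Finset.sum_congr rfl (fun i _ => (hDi i).symm)
    have hcX := count_X hh hκ S Mch hmult D f hfprop
    -- per-column real bound
    have hcol : ∀ i : Fin w,
        ((∏ t : Fin h, (if (t:ℕ) < h - (Di D i).card then (κ*(h-(t:ℕ))).choose κ
           else min ((κ*(h-(t:ℕ))).choose κ) ((R*κ).choose κ)) : ℕ) : ℝ)
          * (((w*h:ℕ):ℝ)^((Di D i).card) * ((κ*h:ℕ):ℝ)^((κ-1)*(Di D i).card))
        ≤ ((Nprod κ h : ℕ):ℝ) * ER^h := by
      intro i
      set c := (Di D i).card with hc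
      have hch : c ≤ h := card_le_h _
      have hnat : (∏ t : Fin h, (if (t:ℕ) < h - c then (κ*(h-(t:ℕ))).choose κ
           else min ((κ*(h-(t:ℕ))).choose κ) ((R*κ).choose κ))) * (c.factorial)^κ
          ≤ Nprod κ h * R^(κ*c) := by
        rw [Fin.prod_univ_eq_prod_range (fun t => (if t < h - c then (κ*(h-t)).choose κ
           else min ((κ*(h-t)).choose κ) ((R*κ).choose κ))) h]
        exact col_prod_bound hκ hR hch
      have hnatR : ((∏ t : Fin h, (if (t:ℕ) < h - c then (κ*(h-(t:ℕ))).choose κ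
           else min ((κ*(h-(t:ℕ))).choose κ) ((R*κ).choose κ)) : ℕ) : ℝ) * ((c.factorial:ℝ))^κ
          ≤ ((Nprod κ h : ℕ):ℝ) * (R:ℝ)^(κ*c) := by
        exact_mod_cast hnat
      have hpc := pc_real (κ := κ) (h := h) (w := w) (R := R) (c := c) hκ hw hR hh hch
      have hfacpos : (0:ℝ) < ((c.factorial:ℝ))^κ := by positivity
      rw [← mul_le_mul_iff_of_pos_right hfacpos]
      calc ((∏ t : Fin h, (if (t:ℕ) < h - c then (κ*(h-(t:ℕ))).choose κ
           else min ((κ*(h-(t:ℕ))).choose κ) ((R*κ).choose κ)) : ℕ) : ℝ)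
          * (((w*h:ℕ):ℝ)^c * ((κ*h:ℕ):ℝ)^((κ-1)*c)) * ((c.factorial:ℝ))^κ
          = (((∏ t : Fin h, (if (t:ℕ) < h - c then (κ*(h-(t:ℕ))).choose κ
           else min ((κ*(h-(t:ℕ))).choose κ) ((R*κ).choose κ)) : ℕ) : ℝ)
             * ((c.factorial:ℝ))^κ) * (((w*h:ℕ):ℝ)^c * ((κ*h:ℕ):ℝ)^((κ-1)*c)) := by ring
      _ ≤ (((Nprod κ h : ℕ):ℝ) * (R:ℝ)^(κ*c)) * (((w*h:ℕ):ℝ)^c * ((κ*h:ℕ):ℝ)^((κ-1)*c)) := by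
          apply mul_le_mul_of_nonneg_right hnatR (by positivity)
      _ = ((Nprod κ h : ℕ):ℝ) * (((w*h:ℕ):ℝ)^c * ((κ*h:ℕ):ℝ)^((κ-1)*c) * (R:ℝ)^(κ*c)) := by
          ring
      _ ≤ ((Nprod κ h : ℕ):ℝ) * ((c.factorial : ℝ)^κ * ER^h) := by
          apply mul_le_mul_of_nonneg_left _ (by positivity)
          rw [hER]
          exact hpc
      _ = ((Nprod κ h : ℕ):ℝ) * ER^h * ((c.factorial:ℝ))^κ := by ring
    -- combine columns
    have hprod : (((∏ i : Fin w, ∏ t : Fin h,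
          (if (t:ℕ) < h - (Di D i).card then (κ*(h-(t:ℕ))).choose κ
           else min ((κ*(h-(t:ℕ))).choose κ) ((R*κ).choose κ))) : ℕ) : ℝ)
          * (((w*h:ℕ):ℝ)^(w*h-τ) * ((κ*h:ℕ):ℝ)^((κ-1)*(w*h-τ)))
        ≤ (((Nprod κ h : ℕ):ℝ) * ER^h)^w := by
      have e1 : (((w*h:ℕ):ℝ))^(w*h-τ) = ∏ i : Fin w, ((w*h:ℕ):ℝ)^((Di D i).card) := by
        rw [Finset.prod_pow_eq_pow_sum, hsumc]
      have e2 : (((κ*h:ℕ):ℝ))^((κ-1)*(w*h-τ))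
          = ∏ i : Fin w, ((κ*h:ℕ):ℝ)^((κ-1)*(Di D i).card) := by
        rw [Finset.prod_pow_eq_pow_sum, ← Finset.mul_sum, hsumc]
      rw [e1, e2, Nat.cast_prod]
      rw [← Finset.prod_mul_distrib, ← Finset.prod_mul_distrib]
      refine le_trans (Finset.prod_le_prod (fun i _ => by positivity)
        (fun i _ => hcol i)) ?_
      rw [Finset.prod_const, Finset.card_univ, Fintype.card_fin]
    have hXle : ((X D f).card : ℝ) ≤ (((∏ i : Fin w, ∏ t : Fin h,
          (if (t:ℕ) < h - (Di D i).card then (κ*(h-(t:ℕ))).choose κ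
           else min ((κ*(h-(t:ℕ))).choose κ) ((R*κ).choose κ))) : ℕ) : ℝ) := by
      exact_mod_cast hcX
    have hfin : (((Nprod κ h : ℕ):ℝ) * ER^h)^w = ((Nprod κ h : ℕ):ℝ)^w * ER^(w*h) := by
      rw [mul_pow, ← pow_mul, Nat.mul_comm h w]
    rw [← hfin]
    refine le_trans (mul_le_mul_of_nonneg_right hXle (by positivity)) hprod
  -- F D cardinality
  have hFcard : ∀ D ∈ 𝒟, ((F D).card : ℝ) ≤ ((w*h:ℕ):ℝ)^(w*h-τ) := by
    intro D hD
    have hDcard : D.card = w*h - τ := (Finset.mem_powersetCard.mp hD).2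
    have h1 : (F D).card ≤ Fintype.card ((↥D) → (Fin w × Fin h)) := by
      rw [← Finset.card_univ]
      apply Finset.card_le_card_of_injOn (fun f => (fun d : ↥D => f d.1))
      · intro f _; exact Finset.mem_univ _
      · intro f1 h1 f2 h2 heq
        simp only [hFdef, Finset.coe_filter, Set.mem_setOf_eq, Finset.mem_univ,
          true_and] at h1 h2
        funext p
        by_cases hp : p ∈ D
        · exact congrFun heq ⟨p, hp⟩
        · rw [h1.1 p hp, h2.1 p hp]
    rw [Fintype.card_fun, Fintype.card_coe, Fintype.card_prod, Fintype.card_fin,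
      Fintype.card_fin, hDcard] at h1
    exact_mod_cast h1
  -- main inequality
  have hmain : (E.card : ℝ) * ((κ*h:ℕ):ℝ)^((κ-1)*(w*h-τ))
      ≤ ((Nprod κ h : ℕ):ℝ)^w
        * (2 * Real.exp 1 ^ κ * (κ:ℝ)^κ * (R:ℝ)^(κ+1) * (w:ℝ))^(w*h) := by
    have hWpos : (0:ℝ) < ((w*h:ℕ):ℝ)^(w*h-τ) := by
      have : (0:ℕ) < w*h := Nat.mul_pos hw hh
      positivity
    have hstep : ∀ D ∈ 𝒟, (∑ f ∈ F D, ((X D f).card:ℝ)) * ((κ*h:ℕ):ℝ)^((κ-1)*(w*h-τ))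
        ≤ ((Nprod κ h : ℕ):ℝ)^w * ER^(w*h) := by
      intro D hD
      have h2 : ∀ f ∈ F D, ((X D f).card:ℝ) * ((κ*h:ℕ):ℝ)^((κ-1)*(w*h-τ))
          ≤ (((Nprod κ h : ℕ):ℝ)^w * ER^(w*h)) / ((w*h:ℕ):ℝ)^(w*h-τ) := by
        intro f hf
        rw [le_div_iff₀ hWpos]
        calc ((X D f).card:ℝ) * ((κ*h:ℕ):ℝ)^((κ-1)*(w*h-τ)) * ((w*h:ℕ):ℝ)^(w*h-τ)
            = ((X D f).card:ℝ)
              * (((w*h:ℕ):ℝ)^(w*h-τ) * ((κ*h:ℕ):ℝ)^((κ-1)*(w*h-τ))) := by ring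
        _ ≤ ((Nprod κ h : ℕ):ℝ)^w * ER^(w*h) := hperD D hD f hf
      calc (∑ f ∈ F D, ((X D f).card:ℝ)) * ((κ*h:ℕ):ℝ)^((κ-1)*(w*h-τ))
          = ∑ f ∈ F D, ((X D f).card:ℝ) * ((κ*h:ℕ):ℝ)^((κ-1)*(w*h-τ)) := by
            rw [Finset.sum_mul]
      _ ≤ ∑ _f ∈ F D, (((Nprod κ h : ℕ):ℝ)^w * ER^(w*h)) / ((w*h:ℕ):ℝ)^(w*h-τ) :=
            Finset.sum_le_sum h2
      _ = ((F D).card : ℝ) * ((((Nprod κ h : ℕ):ℝ)^w * ER^(w*h)) / ((w*h:ℕ):ℝ)^(w*h-τ)) := by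
            rw [Finset.sum_const, nsmul_eq_mul]
      _ ≤ ((w*h:ℕ):ℝ)^(w*h-τ)
            * ((((Nprod κ h : ℕ):ℝ)^w * ER^(w*h)) / ((w*h:ℕ):ℝ)^(w*h-τ)) := by
            apply mul_le_mul_of_nonneg_right (hFcard D hD) (by positivity)
      _ = ((Nprod κ h : ℕ):ℝ)^w * ER^(w*h) := by
            field_simp
    have hDcard2 : (𝒟.card : ℝ) ≤ (2:ℝ)^(w*h) := by
      rw [h𝒟, Finset.card_powersetCard, Finset.card_univ, Fintype.card_prod,
        Fintype.card_fin, Fintype.card_fin]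
      exact_mod_cast choose_le_two_pow (w*h) (w*h-τ)
    calc (E.card : ℝ) * ((κ*h:ℕ):ℝ)^((κ-1)*(w*h-τ))
        ≤ (∑ D ∈ 𝒟, ∑ f ∈ F D, ((X D f).card : ℝ)) * ((κ*h:ℕ):ℝ)^((κ-1)*(w*h-τ)) := by
          apply mul_le_mul_of_nonneg_right _ (by positivity)
          exact_mod_cast hcount
    _ = ∑ D ∈ 𝒟, (∑ f ∈ F D, ((X D f).card : ℝ)) * ((κ*h:ℕ):ℝ)^((κ-1)*(w*h-τ)) := by
          rw [Finset.sum_mul]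
    _ ≤ ∑ _D ∈ 𝒟, ((Nprod κ h : ℕ):ℝ)^w * ER^(w*h) := Finset.sum_le_sum hstep
    _ = (𝒟.card : ℝ) * (((Nprod κ h : ℕ):ℝ)^w * ER^(w*h)) := by
          rw [Finset.sum_const, nsmul_eq_mul]
    _ ≤ (2:ℝ)^(w*h) * (((Nprod κ h : ℕ):ℝ)^w * ER^(w*h)) := by
          apply mul_le_mul_of_nonneg_right hDcard2 (by positivity)
    _ = ((Nprod κ h : ℕ):ℝ)^w
          * (2 * Real.exp 1 ^ κ * (κ:ℝ)^κ * (R:ℝ)^(κ+1) * (w:ℝ))^(w*h) := by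
          rw [hER]
          rw [show (2:ℝ) * Real.exp 1 ^ κ * (κ:ℝ)^κ * (R:ℝ)^(κ+1) * (w:ℝ)
            = 2 * (Real.exp 1 ^ κ * (κ:ℝ)^κ * (R:ℝ)^(κ+1) * (w:ℝ)) from by ring]
          rw [mul_pow]
          ring
  -- conclude
  have hNpos : (0:ℝ) < ((Nprod κ h : ℕ):ℝ)^w := by
    have := Nprod_pos (κ := κ) (h := h) hκ
    positivity
  have hcardΩ : ((Nprod κ h : ℕ):ℝ)^w ≤ (Fintype.card (Fin w → Grouping κ h) : ℝ) := by
    have h1 : Fintype.card (Fin w → Grouping κ h) = (Fintype.card (Grouping κ h))^w := by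
      rw [Fintype.card_fun, Fintype.card_fin]
    rw [h1]
    have h2 : (Nprod κ h)^w ≤ (Fintype.card (Grouping κ h))^w :=
      Nat.pow_le_pow_left (Nprod_le_card hκ) w
    exact_mod_cast h2
  have hKpos : (0:ℝ) < ((κ*h : ℝ))^((κ-1)*(w*h-τ)) := by
    have h1 : (0:ℝ) < (κ:ℝ) := by exact_mod_cast hκ
    have h2 : (0:ℝ) < (h:ℝ) := by exact_mod_cast hh
    positivity
  calc (E.card : ℝ) / (Fintype.card (Fin w → Grouping κ h) : ℝ)
      ≤ (E.card : ℝ) / ((Nprod κ h : ℕ):ℝ)^w := by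
        exact div_le_div_of_nonneg_left (Nat.cast_nonneg _) hNpos hcardΩ
  _ ≤ (2 * Real.exp 1 ^ κ * (κ : ℝ) ^ κ * (R : ℝ) ^ (κ + 1) * w) ^ (w * h)
        / ((κ * h : ℝ)) ^ ((κ - 1) * (w * h - τ)) := by
      rw [div_le_div_iff₀ hNpos hKpos]
      have hcast : ((κ * h : ℝ)) = ((κ*h : ℕ):ℝ) := by push_cast; ring
      rw [hcast]
      calc (E.card : ℝ) * ((κ*h:ℕ):ℝ)^((κ-1)*(w*h-τ))
          ≤ ((Nprod κ h : ℕ):ℝ)^w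
            * (2 * Real.exp 1 ^ κ * (κ:ℝ)^κ * (R:ℝ)^(κ+1) * (w:ℝ))^(w*h) := hmain
      _ = (2 * Real.exp 1 ^ κ * (κ : ℝ) ^ κ * (R : ℝ) ^ (κ + 1) * w) ^ (w * h)
            * ((Nprod κ h : ℕ):ℝ)^w := by ring
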